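/- Let α, γ be real numbers with γ not an integer. Then for all real t: ( (γ−α−2)(γ−α−1)(1−α)(2−α) t⁴ / ( (1−γ)(2−γ)(3−γ)(4−γ)(5−γ) ) ) · ₁F₁(α; γ; t) · ₁F₁(3−α; 6−γ; −t) − (2−γ)(3−γ)(4−γ) · ₁F₁(1−α; 2−γ; −t) · ₁F₁(α−2; γ−4; t) = (γ−4)(γ−3)(γ−2) + (2α−γ)(γ−3) t. -/

import Mathlib

open Finset

/-- Pochhammer symbol `(a)ₙ = a(a+1)⋯(a+n-1)` for natural `n`. -/
noncomputable def poch (a : ℝ) (n : ℕ) : ℝ := Polynomial.eval a (ascPochhammer ℝ n)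

/-- Pochhammer symbol `(a)ₖ` for integer `k`: for `k ≥ 0` the ascending product,
and `(a)₋ₖ = (-1)ᵏ/(1-a)ₖ` for `k ≥ 0`. -/
noncomputable def pochZ (a : ℝ) (k : ℤ) : ℝ :=
  if 0 ≤ k then poch a k.toNat else (-1) ^ (-k).toNat / poch (1 - a) (-k).toNat

/-- The (generally non-terminating) Clausen series `₃F₂(a,b,c;d,e;1)`. -/
noncomputable def F32 (a b c d e : ℝ) : ℝ :=
  ∑' n : ℕ, poch a n * poch b n * poch c n / (poch d n * poch e n * n.factorial)

/-- A terminating `₃F₂(a,b,c;d,e;1)` summed over `k = 0, …, N`. -/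
noncomputable def F32sum (N : ℕ) (a b c d e : ℝ) : ℝ :=
  ∑ k ∈ Finset.range (N + 1),
    poch a k * poch b k * poch c k / (poch d k * poch e k * k.factorial)

/-- The Kummer confluent hypergeometric function `₁F₁(a;b;x)`. -/
noncomputable def F11 (a b x : ℝ) : ℝ :=
  ∑' n : ℕ, poch a n * x ^ n / (poch b n * n.factorial)


lemma poch_zero (a : ℝ) : poch a 0 = 1 := by simp [poch]
lemma poch_succ (a : ℝ) (n : ℕ) : poch a (n+1) = poch a n * (a + n) := by
  simp [poch, ascPochhammer_succ_right]
lemma poch_ne_zero {x : ℝ} (h : ∀ i : ℕ, x + (i:ℝ) ≠ 0) (k : ℕ) : poch x k ≠ 0 := by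
  induction k with
  | zero => simp [poch_zero]
  | succ n ih => rw [poch_succ]; exact mul_ne_zero ih (h n)

namespace K6
noncomputable def A2 (α γ : ℝ) (k : ℕ) : ℝ := poch (1-α) k * (-1)^k / (poch (2-γ) k * k.factorial)
noncomputable def B2 (α γ : ℝ) (m : ℕ) : ℝ := poch (α-2) m / (poch (γ-4) m * m.factorial)
noncomputable def Bz (α γ : ℝ) (j : ℤ) : ℝ := if 0 ≤ j then B2 α γ j.toNat else 0
noncomputable def C1 (α γ : ℝ) (k : ℕ) : ℝ := poch α k / (poch γ k * k.factorial)
noncomputable def D1 (α γ : ℝ) (m : ℕ) : ℝ := poch (3-α) m * (-1)^m / (poch (6-γ) m * m.factorial)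
noncomputable def Dz (α γ : ℝ) (j : ℤ) : ℝ := if 0 ≤ j then D1 α γ j.toNat else 0
noncomputable def uu (α γ : ℝ) (n : ℕ) : ℝ := ∑ k ∈ Finset.range (n+1), A2 α γ k * B2 α γ (n-k)
noncomputable def vv (α γ : ℝ) (n : ℕ) : ℝ := ∑ k ∈ Finset.range (n+1), C1 α γ k * D1 α γ (n-k)

variable {α γ : ℝ}

section
variable (hγ : ∀ k : ℤ, γ ≠ (k : ℝ))
include hγ

lemma gne (m : ℤ) (x : ℝ) (h : x + γ = (m:ℝ) ∨ x - γ = (m:ℝ)) : x ≠ 0 := by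
  rcases h with h | h
  · intro h0; rw [h0, zero_add] at h; exact hγ m h
  · intro h0; rw [h0, zero_sub] at h
    exact hγ (-m) (by push_cast; linarith)

lemma g2γ (k : ℕ) : 2 - γ + (k:ℝ) ≠ 0 :=
  gne hγ ((k:ℤ)+2) _ (Or.inl (by push_cast; ring))
lemma gγ4 (k : ℕ) : γ - 4 + (k:ℝ) ≠ 0 :=
  gne hγ ((k:ℤ)-4) _ (Or.inr (by push_cast; ring))
lemma gγ0 (k : ℕ) : γ + (k:ℝ) ≠ 0 :=
  gne hγ ((k:ℤ)) _ (Or.inr (by push_cast; ring))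
lemma g6γ (k : ℕ) : 6 - γ + (k:ℝ) ≠ 0 :=
  gne hγ ((k:ℤ)+6) _ (Or.inl (by push_cast; ring))

lemma A2_rec (k : ℕ) : ((k:ℝ)+1) * (2-γ+(k:ℝ)) * A2 α γ (k+1) = -(1-α+(k:ℝ)) * A2 α γ k := by
  unfold A2
  rw [poch_succ, poch_succ, Nat.factorial_succ, pow_succ]
  have h1 : poch (2-γ) k ≠ 0 := poch_ne_zero (g2γ hγ) k
  have h2 : ((k.factorial : ℝ)) ≠ 0 := Nat.cast_ne_zero.mpr k.factorial_ne_zero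
  have h3 := g2γ hγ k
  have h4 : ((k:ℝ)+1) ≠ 0 := by positivity
  push_cast
  field_simp

lemma B2_rec (m : ℕ) : ((m:ℝ)+1) * (γ-4+(m:ℝ)) * B2 α γ (m+1) = (α-2+(m:ℝ)) * B2 α γ m := by
  unfold B2
  rw [poch_succ, poch_succ, Nat.factorial_succ]
  have h1 : poch (γ-4) m ≠ 0 := poch_ne_zero (gγ4 hγ) m
  have h2 : ((m.factorial : ℝ)) ≠ 0 := Nat.cast_ne_zero.mpr m.factorial_ne_zero
  have h3 := gγ4 hγ m
  have h4 : ((m:ℝ)+1) ≠ 0 := by positivity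
  push_cast
  field_simp

lemma Bz_rec (j : ℤ) : ((j:ℝ)+1) * (γ-4+(j:ℝ)) * Bz α γ (j+1) = (α-2+(j:ℝ)) * Bz α γ j := by
  rcases j with m | m
  · have e : (Int.ofNat m) + 1 = Int.ofNat (m+1) := rfl
    rw [e]
    simp only [Bz, Int.ofNat_eq_coe, Int.le.intro_sub, if_pos (by omega : (0:ℤ) ≤ (m:ℤ)),
      if_pos (by omega : (0:ℤ) ≤ ((m+1:ℕ):ℤ)), Int.toNat_natCast]
    push_cast
    exact B2_rec hγ m
  · cases m with
    | zero =>
      have e1 : Int.negSucc 0 + 1 = 0 := rfl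
      rw [e1]
      simp [Bz, Int.cast_negSucc]
    | succ m =>
      have e1 : Int.negSucc (m+1) + 1 = Int.negSucc m := rfl
      rw [e1]
      simp [Bz]

lemma C1_rec (k : ℕ) : ((k:ℝ)+1) * (γ+(k:ℝ)) * C1 α γ (k+1) = (α+(k:ℝ)) * C1 α γ k := by
  unfold C1
  rw [poch_succ, poch_succ, Nat.factorial_succ]
  have h1 : poch γ k ≠ 0 := poch_ne_zero (gγ0 hγ) k
  have h2 : ((k.factorial : ℝ)) ≠ 0 := Nat.cast_ne_zero.mpr k.factorial_ne_zero
  have h3 := gγ0 hγ k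
  have h4 : ((k:ℝ)+1) ≠ 0 := by positivity
  push_cast
  field_simp

lemma D1_rec (m : ℕ) : ((m:ℝ)+1) * (6-γ+(m:ℝ)) * D1 α γ (m+1) = -(3-α+(m:ℝ)) * D1 α γ m := by
  unfold D1
  rw [poch_succ, poch_succ, Nat.factorial_succ, pow_succ]
  have h1 : poch (6-γ) m ≠ 0 := poch_ne_zero (g6γ hγ) m
  have h2 : ((m.factorial : ℝ)) ≠ 0 := Nat.cast_ne_zero.mpr m.factorial_ne_zero
  have h3 := g6γ hγ m
  have h4 : ((m:ℝ)+1) ≠ 0 := by positivity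
  push_cast
  field_simp

lemma Dz_rec (j : ℤ) : ((j:ℝ)+1) * (6-γ+(j:ℝ)) * Dz α γ (j+1) = -(3-α+(j:ℝ)) * Dz α γ j := by
  rcases j with m | m
  · have e : (Int.ofNat m) + 1 = Int.ofNat (m+1) := rfl
    rw [e]
    simp only [Dz, Int.ofNat_eq_coe, if_pos (by omega : (0:ℤ) ≤ (m:ℤ)),
      if_pos (by omega : (0:ℤ) ≤ ((m+1:ℕ):ℤ)), Int.toNat_natCast]
    push_cast
    exact D1_rec hγ m
  · cases m with
    | zero =>
      have e1 : Int.negSucc 0 + 1 = 0 := rfl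
      rw [e1]
      simp [Dz, Int.cast_negSucc]
    | succ m =>
      have e1 : Int.negSucc (m+1) + 1 = Int.negSucc m := rfl
      rw [e1]
      simp [Dz]

noncomputable def X2f (γ nn kk : ℝ) : ℝ :=
  kk*(-12+16*γ-4*γ^2) + kk^2*(-11+2*γ+γ^2) + kk^3*(2-2*γ) + kk^4
    + nn^2*kk*(-2+2*γ) - 2*nn^2*kk^2
noncomputable def Y2f (α γ kk : ℝ) : ℝ := kk*((1-α)*(1-γ)) + kk^2*(2-γ-α) + kk^3
noncomputable def G2 (α γ : ℝ) (n k : ℕ) : ℝ :=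
  A2 α γ k * (X2f γ n k * Bz α γ ((n:ℤ)+2-k) + Y2f α γ k * Bz α γ ((n:ℤ)+1-k))
noncomputable def P2f (γ nn : ℝ) : ℝ := (nn^2-4)*(nn^2-(3-γ)^2)
noncomputable def P1f (α γ nn : ℝ) : ℝ := (2*α-γ)*(nn-2*nn^2)
noncomputable def P0f (nn : ℝ) : ℝ := nn - nn^2

lemma key2 (n k : ℕ) :
    P2f γ n * (A2 α γ k * Bz α γ ((n:ℤ)+2-k)) + P1f α γ n * (A2 α γ k * Bz α γ ((n:ℤ)+1-k))
      + P0f n * (A2 α γ k * Bz α γ ((n:ℤ)-k))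
    = G2 α γ n (k+1) - G2 α γ n k := by
  have e2 : (n:ℤ)+2-k = ((n:ℤ)-k)+2 := by ring
  have e1 : (n:ℤ)+1-k = ((n:ℤ)-k)+1 := by ring
  have e2' : (n:ℤ)+2-((k+1:ℕ):ℤ) = ((n:ℤ)-k)+1 := by push_cast; ring
  have e1' : (n:ℤ)+1-((k+1:ℕ):ℤ) = (n:ℤ)-k := by push_cast; ring
  have hb1 := Bz_rec (α:=α) hγ (((n:ℤ)-k)+1)
  have hb0 := Bz_rec (α:=α) hγ ((n:ℤ)-k)
  have hA := A2_rec (α:=α) (γ:=γ) hγ k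
  rw [show ((n:ℤ)-k)+1+1 = ((n:ℤ)-k)+2 by ring] at hb1
  unfold G2
  rw [e2, e1, e2', e1']
  set b2 := Bz α γ (((n:ℤ)-k)+2) with hb2def
  set b1 := Bz α γ (((n:ℤ)-k)+1) with hb1def
  set b0 := Bz α γ ((n:ℤ)-k) with hb0def
  set a0 := A2 α γ k with ha0def
  set a1 := A2 α γ (k+1) with ha1def
  push_cast at hb1 hb0 ⊢
  set nn := (n:ℝ) with hnn
  set kk := (k:ℝ) with hkk
  have hc : (kk+1) * (2-γ+kk) ≠ 0 := by
    have h4 : (kk+1) ≠ 0 := by rw [hkk]; positivity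
    exact mul_ne_zero h4 (g2γ hγ k)
  refine mul_left_cancel₀ hc ?_
  unfold P2f P1f P0f X2f Y2f
  linear_combination (-(
      ((kk+1)*(-12+16*γ-4*γ^2) + (kk+1)^2*(-11+2*γ+γ^2) + (kk+1)^3*(2-2*γ) + (kk+1)^4
        + nn^2*(kk+1)*(-2+2*γ) - 2*nn^2*(kk+1)^2) * b1
      + ((kk+1)*((1-α)*(1-γ)) + (kk+1)^2*(2-γ-α) + (kk+1)^3) * b0)) * hA
    + (a0 * ((-12) + 2*(nn-kk) + 2*(nn-kk)^2 + (-14)*kk + 11*kk*(nn-kk) + 3*kk*(nn-kk)^2 + 8*kk^2 + 13*kk^2*(nn-kk) + kk^2*(nn-kk)^2 + 14*kk^3 + 4*kk^3*(nn-kk) + 4*kk^4 + 10*γ + (-3)*γ*(nn-kk) + (-1)*γ*(nn-kk)^2 + 6*γ*kk + (-8)*γ*kk*(nn-kk) + (-1)*γ*kk*(nn-kk)^2 + (-10)*γ*kk^2 + (-5)*γ*kk^2*(nn-kk) + (-6)*γ*kk^3 + (-2)*γ^2 + γ^2*(nn-kk) + γ^2*kk*(nn-kk) + 2*γ^2*kk^2))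 * hb1
    + (a0 * (2 + 2*(nn-kk) + 7*kk + 3*kk*(nn-kk) + 7*kk^2 + kk^2*(nn-kk) + 2*kk^3 + (-1)*γ + (-1)*γ*(nn-kk) + (-3)*γ*kk + (-1)*γ*kk*(nn-kk) + (-2)*γ*kk^2 + (-2)*α + (-3)*α*kk + (-1)*α*kk^2 + α*γ + α*γ*kk)) * hb0

noncomputable def X1f (γ nn kk : ℝ) : ℝ :=
  kk*(44-48*γ+4*γ^2) + kk^2*(-43+2*γ+γ^2) + kk^3*(-2+2*γ) + kk^4
    + nn*kk*(16-16*γ) - 16*nn*kk^2 + nn^2*kk*(2-2*γ) - 2*nn^2*kk^2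
noncomputable def Y1f (α γ kk : ℝ) : ℝ := kk*(α*(1-γ)) + kk^2*(1-γ-α) - kk^3
noncomputable def G1 (α γ : ℝ) (n k : ℕ) : ℝ :=
  C1 α γ k * (X1f γ n k * Dz α γ ((n:ℤ)+2-k) + Y1f α γ k * Dz α γ ((n:ℤ)+1-k))

lemma key1 (n k : ℕ) :
    P2f γ ((n:ℝ)+4) * (C1 α γ k * Dz α γ ((n:ℤ)+2-k))
      + P1f α γ ((n:ℝ)+4) * (C1 α γ k * Dz α γ ((n:ℤ)+1-k))
      + P0f ((n:ℝ)+4) * (C1 α γ k * Dz α γ ((n:ℤ)-k))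
    = G1 α γ n (k+1) - G1 α γ n k := by
  have e2' : (n:ℤ)+2-((k+1:ℕ):ℤ) = ((n:ℤ)-k)+1 := by push_cast; ring
  have e1' : (n:ℤ)+1-((k+1:ℕ):ℤ) = (n:ℤ)-k := by push_cast; ring
  have e2 : (n:ℤ)+2-k = ((n:ℤ)-k)+2 := by ring
  have e1 : (n:ℤ)+1-k = ((n:ℤ)-k)+1 := by ring
  have hb1 := Dz_rec (α:=α) hγ (((n:ℤ)-k)+1)
  have hb0 := Dz_rec (α:=α) hγ ((n:ℤ)-k)
  have hA := C1_rec (α:=α) (γ:=γ) hγ k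
  rw [show ((n:ℤ)-k)+1+1 = ((n:ℤ)-k)+2 by ring] at hb1
  unfold G1
  rw [e2, e1, e2', e1']
  set b2 := Dz α γ (((n:ℤ)-k)+2) with hb2def
  set b1 := Dz α γ (((n:ℤ)-k)+1) with hb1def
  set b0 := Dz α γ ((n:ℤ)-k) with hb0def
  set a0 := C1 α γ k with ha0def
  set a1 := C1 α γ (k+1) with ha1def
  push_cast at hb1 hb0 ⊢
  set nn := (n:ℝ) with hnn
  set kk := (k:ℝ) with hkk
  have hc : (kk+1) * (γ+kk) ≠ 0 := by
    have h4 : (kk+1) ≠ 0 := by rw [hkk]; positivity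
    exact mul_ne_zero h4 (gγ0 hγ k)
  refine mul_left_cancel₀ hc ?_
  unfold P2f P1f P0f X1f Y1f
  linear_combination (-(
      ((kk+1)*(44-48*γ+4*γ^2) + (kk+1)^2*(-43+2*γ+γ^2) + (kk+1)^3*(-2+2*γ) + (kk+1)^4
        + nn*(kk+1)*(16-16*γ) - 16*nn*(kk+1)^2 + nn^2*(kk+1)*(2-2*γ) - 2*nn^2*(kk+1)^2) * b1
      + ((kk+1)*(α*(1-γ)) + (kk+1)^2*(1-γ-α) - (kk+1)^3) * b0)) * hA
    + (a0 * (6*kk + 7*kk*(nn-kk) + kk*(nn-kk)^2 + 20*kk^2 + 11*kk^2*(nn-kk) + kk^2*(nn-kk)^2 + 18*kk^3 + 4*kk^3*(nn-kk) + 4*kk^4 + 6*γ + 7*γ*(nn-kk) + γ*(nn-kk)^2 + 26*γ*kk + 12*γ*kk*(nn-kk) + γ*kk*(nn-kk)^2 + 26*γ*kk^2 + 5*γ*kk^2*(nn-kk) + 6*γ*kk^3 + 6*γ^2 + γ^2*(nn-kk) + 8*γ^2*kk + γ^2*kk*(nn-kk) + 2*γ^2*kk^2)) * hb1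
    + (a0 * ((-4)*kk + (-1)*kk*(nn-kk) + (-6)*kk^2 + (-1)*kk^2*(nn-kk) + (-2)*kk^3 + (-4)*γ + (-1)*γ*(nn-kk) + (-6)*γ*kk + (-1)*γ*kk*(nn-kk) + (-2)*γ*kk^2 + (-1)*α*kk + (-1)*α*kk^2 + (-1)*α*γ + (-1)*α*γ*kk)) * hb0

lemma sum_ABz (m N : ℕ) (h : m < N) :
    ∑ k ∈ Finset.range N, A2 α γ k * Bz α γ ((m:ℤ)-k) = uu α γ m := by
  rw [uu]
  rw [← Finset.sum_subset (Finset.range_subset_range.mpr (by omega : m+1 ≤ N))]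
  · apply Finset.sum_congr rfl
    intro k hk
    have hk' : k ≤ m := by simpa [Nat.lt_succ_iff] using hk
    have h0 : (0:ℤ) ≤ (m:ℤ)-k := by omega
    rw [Bz, if_pos h0]
    have e : ((m:ℤ)-k).toNat = m - k := by omega
    rw [e]
  · intro k hk hk2
    have : m < k := by simp at hk hk2; omega
    have h0 : ¬ (0:ℤ) ≤ (m:ℤ)-k := by omega
    rw [Bz, if_neg h0, mul_zero]

lemma sum_CDz (m N : ℕ) (h : m < N) :
    ∑ k ∈ Finset.range N, C1 α γ k * Dz α γ ((m:ℤ)-k) = vv α γ m := by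
  rw [vv]
  rw [← Finset.sum_subset (Finset.range_subset_range.mpr (by omega : m+1 ≤ N))]
  · apply Finset.sum_congr rfl
    intro k hk
    have hk' : k ≤ m := by simpa [Nat.lt_succ_iff] using hk
    have h0 : (0:ℤ) ≤ (m:ℤ)-k := by omega
    rw [Dz, if_pos h0]
    have e : ((m:ℤ)-k).toNat = m - k := by omega
    rw [e]
  · intro k hk hk2
    have : m < k := by simp at hk hk2; omega
    have h0 : ¬ (0:ℤ) ≤ (m:ℤ)-k := by omega
    rw [Dz, if_neg h0, mul_zero]

lemma Ru (n : ℕ) :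
    P2f γ n * uu α γ (n+2) + P1f α γ n * uu α γ (n+1) + P0f n * uu α γ n = 0 := by
  have hstep : ∀ k ∈ Finset.range (n+3),
      P2f γ n * (A2 α γ k * Bz α γ ((n:ℤ)+2-k)) + P1f α γ n * (A2 α γ k * Bz α γ ((n:ℤ)+1-k))
        + P0f n * (A2 α γ k * Bz α γ ((n:ℤ)-k))
      = G2 α γ n (k+1) - G2 α γ n k := fun k _ => key2 hγ n k
  have htel := Finset.sum_range_sub (G2 α γ n) (n+3)
  have hsum := (Finset.sum_congr rfl hstep).trans htel
  have hG0 : G2 α γ n 0 = 0 := by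
    unfold G2 X2f Y2f
    norm_num
  have hGend : G2 α γ n (n+3) = 0 := by
    unfold G2
    rw [show (n:ℤ)+2-((n+3:ℕ):ℤ) = -1 by push_cast; ring,
        show (n:ℤ)+1-((n+3:ℕ):ℤ) = -2 by push_cast; ring]
    simp [Bz]
  rw [hG0, hGend, sub_zero] at hsum
  rw [Finset.sum_add_distrib, Finset.sum_add_distrib] at hsum
  rw [← Finset.mul_sum, ← Finset.mul_sum, ← Finset.mul_sum] at hsum
  have i2 : ∑ k ∈ Finset.range (n+3), A2 α γ k * Bz α γ ((n:ℤ)+2-k) = uu α γ (n+2) := by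
    rw [← sum_ABz hγ (n+2) (n+3) (by omega)]
    apply Finset.sum_congr rfl
    intro k _
    congr 2
  have i1 : ∑ k ∈ Finset.range (n+3), A2 α γ k * Bz α γ ((n:ℤ)+1-k) = uu α γ (n+1) := by
    rw [← sum_ABz hγ (n+1) (n+3) (by omega)]
    apply Finset.sum_congr rfl
    intro k _
    congr 2
  have i0 : ∑ k ∈ Finset.range (n+3), A2 α γ k * Bz α γ ((n:ℤ)-k) = uu α γ n := by
    exact sum_ABz hγ n (n+3) (by omega)
  rw [i2, i1, i0] at hsum
  exact hsum

lemma Rv (n : ℕ) :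
    P2f γ ((n:ℝ)+4) * vv α γ (n+2) + P1f α γ ((n:ℝ)+4) * vv α γ (n+1)
      + P0f ((n:ℝ)+4) * vv α γ n = 0 := by
  have hstep : ∀ k ∈ Finset.range (n+3),
      P2f γ ((n:ℝ)+4) * (C1 α γ k * Dz α γ ((n:ℤ)+2-k))
        + P1f α γ ((n:ℝ)+4) * (C1 α γ k * Dz α γ ((n:ℤ)+1-k))
        + P0f ((n:ℝ)+4) * (C1 α γ k * Dz α γ ((n:ℤ)-k))
      = G1 α γ n (k+1) - G1 α γ n k := fun k _ => key1 hγ n k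
  have htel := Finset.sum_range_sub (G1 α γ n) (n+3)
  have hsum := (Finset.sum_congr rfl hstep).trans htel
  have hG0 : G1 α γ n 0 = 0 := by
    unfold G1 X1f Y1f
    norm_num
  have hGend : G1 α γ n (n+3) = 0 := by
    unfold G1
    rw [show (n:ℤ)+2-((n+3:ℕ):ℤ) = -1 by push_cast; ring,
        show (n:ℤ)+1-((n+3:ℕ):ℤ) = -2 by push_cast; ring]
    simp [Dz]
  rw [hG0, hGend, sub_zero] at hsum
  rw [Finset.sum_add_distrib, Finset.sum_add_distrib] at hsum
  rw [← Finset.mul_sum, ← Finset.mul_sum, ← Finset.mul_sum] at hsum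
  have i2 : ∑ k ∈ Finset.range (n+3), C1 α γ k * Dz α γ ((n:ℤ)+2-k) = vv α γ (n+2) := by
    rw [← sum_CDz hγ (n+2) (n+3) (by omega)]
    apply Finset.sum_congr rfl
    intro k _
    congr 2
  have i1 : ∑ k ∈ Finset.range (n+3), C1 α γ k * Dz α γ ((n:ℤ)+1-k) = vv α γ (n+1) := by
    rw [← sum_CDz hγ (n+1) (n+3) (by omega)]
    apply Finset.sum_congr rfl
    intro k _
    congr 2
  have i0 : ∑ k ∈ Finset.range (n+3), C1 α γ k * Dz α γ ((n:ℤ)-k) = vv α γ n := by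
    exact sum_CDz hγ n (n+3) (by omega)
  rw [i2, i1, i0] at hsum
  exact hsum

noncomputable def c2v (γ : ℝ) : ℝ := (2-γ)*(3-γ)*(4-γ)
noncomputable def cF (α γ : ℝ) : ℝ :=
  (γ-α-2)*(γ-α-1)*(1-α)*(2-α) / ((1-γ)*(2-γ)*(3-γ)*(4-γ)*(5-γ))

omit hγ in
lemma hA0 : A2 α γ 0 = 1 := by simp [A2, poch_zero]
omit hγ in
lemma hB0 : B2 α γ 0 = 1 := by simp [B2, poch_zero]
omit hγ in
lemma hC0 : C1 α γ 0 = 1 := by simp [C1, poch_zero]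
omit hγ in
lemma hD0 : D1 α γ 0 = 1 := by simp [D1, poch_zero]

omit hγ in
lemma uu_exp0 : uu α γ 0 = A2 α γ 0 * B2 α γ 0 := by
  simp [uu, Finset.sum_range_succ]

omit hγ in
lemma uu_exp1 : uu α γ 1 = A2 α γ 0 * B2 α γ 1 + A2 α γ 1 * B2 α γ 0 := by
  simp [uu, Finset.sum_range_succ]

omit hγ in
lemma uu_exp2 : uu α γ 2 = A2 α γ 0 * B2 α γ 2 + A2 α γ 1 * B2 α γ 1 + A2 α γ 2 * B2 α γ 0 := by
  simp [uu, Finset.sum_range_succ]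

omit hγ in
lemma uu_exp3 : uu α γ 3 = A2 α γ 0 * B2 α γ 3 + A2 α γ 1 * B2 α γ 2 + A2 α γ 2 * B2 α γ 1 + A2 α γ 3 * B2 α γ 0 := by
  simp [uu, Finset.sum_range_succ]

omit hγ in
lemma uu_exp4 : uu α γ 4 = A2 α γ 0 * B2 α γ 4 + A2 α γ 1 * B2 α γ 3 + A2 α γ 2 * B2 α γ 2 + A2 α γ 3 * B2 α γ 1 + A2 α γ 4 * B2 α γ 0 := by
  simp [uu, Finset.sum_range_succ]

omit hγ in
lemma uu_exp5 : uu α γ 5 = A2 α γ 0 * B2 α γ 5 + A2 α γ 1 * B2 α γ 4 + A2 α γ 2 * B2 α γ 3 + A2 α γ 3 * B2 α γ 2 + A2 α γ 4 * B2 α γ 1 + A2 α γ 5 * B2 α γ 0 := by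
  simp [uu, Finset.sum_range_succ]

omit hγ in
lemma vv_exp0 : vv α γ 0 = C1 α γ 0 * D1 α γ 0 := by
  simp [vv, Finset.sum_range_succ]

omit hγ in
lemma vv_exp1 : vv α γ 1 = C1 α γ 0 * D1 α γ 1 + C1 α γ 1 * D1 α γ 0 := by
  simp [vv, Finset.sum_range_succ]

lemma gm4 : γ - 4 ≠ 0 := fun h => hγ 4 (by push_cast; linarith)
lemma g0 : γ ≠ 0 := fun h => hγ 0 (by push_cast; linarith)
lemma g6 : (6:ℝ) - γ ≠ 0 := fun h => hγ 6 (by push_cast; linarith)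

lemma hq0 : c2v γ * uu α γ 0 + (γ-4)*(γ-3)*(γ-2) = 0 := by
  rw [uu_exp0, hA0, hB0, c2v]; ring

lemma hq1 : c2v γ * uu α γ 1 + (2*α-γ)*(γ-3) = 0 := by
  refine mul_left_cancel₀ (gm4 hγ) ?_
  rw [uu_exp1, c2v]
  linear_combination (((-48) + 40*γ + (-11)*γ^2 + γ^3)*B2 α γ 0) * (A2_rec (α:=α) hγ 0)
    + ((24 + (-26)*γ + 9*γ^2 + (-1)*γ^3)*A2 α γ 0) * (B2_rec (α:=α) hγ 0)
    + ((12*γ + (-7)*γ^2 + γ^3 + (-24)*α + 14*α*γ + (-2)*α*γ^2)*B2 α γ 0) * hA0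
    + ((12*γ + (-7)*γ^2 + γ^3 + (-24)*α + 14*α*γ + (-2)*α*γ^2)) * hB0

lemma hu2 : uu α γ 2 = 0 := by
  refine mul_left_cancel₀ (mul_ne_zero (mul_ne_zero (mul_ne_zero
    (fun h => hγ 2 (by push_cast; linarith) : (2:ℝ)-γ ≠ 0)
    (fun h => hγ 3 (by push_cast; linarith) : (3:ℝ)-γ ≠ 0)) (gm4 hγ))
    (fun h => hγ 3 (by push_cast; linarith) : γ-3 ≠ 0)) ?_
  rw [uu_exp2]
  linear_combination ((12 + (-13)*γ + (9/2)*γ^2 + ((-1/2))*γ^3)*B2 α γ 0) * (A2_rec (α:=α) hγ 1)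
    + ((36 + (-33)*γ + 10*γ^2 + (-1)*γ^3)*B2 α γ 1) * (A2_rec (α:=α) hγ 0)
    + (((-12) + 7*γ + (-1)*γ^2 + 6*α + ((-7/2))*α*γ + (1/2)*α*γ^2)*B2 α γ 0) * (A2_rec (α:=α) hγ 0)
    + (((-12) + 13*γ + ((-9/2))*γ^2 + (1/2)*γ^3)*A2 α γ 0) * (B2_rec (α:=α) hγ 1)
    + ((6 + ((-7/2))*γ + (1/2)*γ^2 + (-6)*α + (7/2)*α*γ + ((-1/2))*α*γ^2)*A2 α γ 0) * (B2_rec (α:=α) hγ 0)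

lemma hu3 : uu α γ 3 = 0 := by
  refine mul_left_cancel₀ (mul_ne_zero (mul_ne_zero (mul_ne_zero (mul_ne_zero (mul_ne_zero
    (fun h => hγ 2 (by push_cast; linarith) : (2:ℝ)-γ ≠ 0)
    (fun h => hγ 3 (by push_cast; linarith) : (3:ℝ)-γ ≠ 0))
    (fun h => hγ 4 (by push_cast; linarith) : (4:ℝ)-γ ≠ 0)) (gm4 hγ))
    (fun h => hγ 3 (by push_cast; linarith) : γ-3 ≠ 0))
    (fun h => hγ 2 (by push_cast; linarith) : γ-2 ≠ 0)) ?_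
  rw [uu_exp3]
  linear_combination (((-48) + 92*γ + ((-208/3))*γ^2 + (77/3)*γ^3 + ((-14/3))*γ^4 + (1/3)*γ^5)*B2 α γ 0) * (A2_rec (α:=α) hγ 2)
    + (((-96) + 176*γ + (-126)*γ^2 + 44*γ^3 + ((-15/2))*γ^4 + (1/2)*γ^5)*B2 α γ 1) * (A2_rec (α:=α) hγ 1)
    + ((24 + (-38)*γ + 22*γ^2 + ((-11/2))*γ^3 + (1/2)*γ^4 + (-8)*α + (38/3)*α*γ + ((-22/3))*α*γ^2 + (11/6)*α*γ^3 + ((-1/6))*α*γ^4)*B2 α γ 0) * (A2_rec (α:=α) hγ 1)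
    + (((-288) + 480*γ + (-314)*γ^2 + 101*γ^3 + (-16)*γ^4 + γ^5)*B2 α γ 2) * (A2_rec (α:=α) hγ 0)
    + ((96 + (-128)*γ + 62*γ^2 + (-13)*γ^3 + γ^4 + (-48)*α + 64*α*γ + (-31)*α*γ^2 + (13/2)*α*γ^3 + ((-1/2))*α*γ^4)*B2 α γ 1) * (A2_rec (α:=α) hγ 0)
    + (((-24) + 26*γ + (-9)*γ^2 + γ^3 + 20*α + ((-65/3))*α*γ + (15/2)*α*γ^2 + ((-5/6))*α*γ^3 + (-4)*α^2 + (13/3)*α^2*γ + ((-3/2))*α^2*γ^2 + (1/6)*α^2*γ^3)*B2 α γ 0) * (A2_rec (α:=α) hγ 0)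
    + ((96 + (-160)*γ + (314/3)*γ^2 + ((-101/3))*γ^3 + (16/3)*γ^4 + ((-1/3))*γ^5)*A2 α γ 0) * (B2_rec (α:=α) hγ 2)
    + (((-48) + 64*γ + (-31)*γ^2 + (13/2)*γ^3 + ((-1/2))*γ^4 + 32*α + ((-128/3))*α*γ + (62/3)*α*γ^2 + ((-13/3))*α*γ^3 + (1/3)*α*γ^4)*A2 α γ 0) * (B2_rec (α:=α) hγ 1)
    + ((12 + (-13)*γ + (9/2)*γ^2 + ((-1/2))*γ^3 + (-16)*α + (52/3)*α*γ + (-6)*α*γ^2 + (2/3)*α*γ^3 + 4*α^2 + ((-13/3))*α^2*γ + (3/2)*α^2*γ^2 + ((-1/6))*α^2*γ^3)*A2 α γ 0) * (B2_rec (α:=α) hγ 0)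

lemma hb4 : ((1-γ)*(2-γ)*(3-γ)*(4-γ)*(5-γ)) * (c2v γ * uu α γ 4)
    = ((γ-α-2)*(γ-α-1)*(1-α)*(2-α)) * vv α γ 0 := by
  rw [uu_exp4, vv_exp0, c2v]
  linear_combination ((144 + (-456)*γ + 589*γ^2 + (-406)*γ^3 + (649/4)*γ^4 + ((-151/4))*γ^5 + (19/4)*γ^6 + ((-1/4))*γ^7)*B2 α γ 0) * (A2_rec (α:=α) hγ 3)
    + ((240 + (-748)*γ + (2840/3)*γ^2 + ((-1909/3))*γ^3 + (740/3)*γ^4 + ((-166/3))*γ^5 + (20/3)*γ^6 + ((-1/3))*γ^7)*B2 α γ 1) * (A2_rec (α:=α) hγ 2)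
    + (((-48) + 140*γ + ((-484/3))*γ^2 + 95*γ^3 + ((-91/3))*γ^4 + 5*γ^5 + ((-1/3))*γ^6 + 12*α + (-35)*α*γ + (121/3)*α*γ^2 + ((-95/4))*α*γ^3 + (91/12)*α*γ^4 + ((-5/4))*α*γ^5 + (1/12)*α*γ^6)*B2 α γ 0) * (A2_rec (α:=α) hγ 2)
    + ((480 + (-1456)*γ + 1782*γ^2 + (-1152)*γ^3 + (855/2)*γ^4 + ((-183/2))*γ^5 + (21/2)*γ^6 + ((-1/2))*γ^7)*B2 α γ 2) * (A2_rec (α:=α) hγ 1)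
    + (((-120) + 334*γ + (-362)*γ^2 + (395/2)*γ^3 + ((-115/2))*γ^4 + (17/2)*γ^5 + ((-1/2))*γ^6 + 40*α + ((-334/3))*α*γ + (362/3)*α*γ^2 + ((-395/6))*α*γ^3 + (115/6)*α*γ^4 + ((-17/6))*α*γ^5 + (1/6)*α*γ^6)*B2 α γ 1) * (A2_rec (α:=α) hγ 1)
    + ((24 + (-62)*γ + 60*γ^2 + ((-55/2))*γ^3 + 6*γ^4 + ((-1/2))*γ^5 + (-14)*α + (217/6)*α*γ + (-35)*α*γ^2 + (385/24)*α*γ^3 + ((-7/2))*α*γ^4 + (7/24)*α*γ^5 + 2*α^2 + ((-31/6))*α^2*γ + 5*α^2*γ^2 + ((-55/24))*α^2*γ^3 + (1/2)*α^2*γ^4 + ((-1/24))*α^2*γ^5)*B2 α γ 0) * (A2_rec (α:=α) hγ 1)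
    + ((1440 + (-4128)*γ + 4738*γ^2 + (-2869)*γ^3 + 1000*γ^4 + (-202)*γ^5 + 22*γ^6 + (-1)*γ^7)*B2 α γ 3) * (A2_rec (α:=α) hγ 0)
    + (((-480) + 1216*γ + (-1174)*γ^2 + 565*γ^3 + (-145)*γ^4 + 19*γ^5 + (-1)*γ^6 + 240*α + (-608)*α*γ + 587*α*γ^2 + ((-565/2))*α*γ^3 + (145/2)*α*γ^4 + ((-19/2))*α*γ^5 + (1/2)*α*γ^6)*B2 α γ 2) * (A2_rec (α:=α) hγ 0)
    + ((120 + (-274)*γ + 225*γ^2 + (-85)*γ^3 + 15*γ^4 + (-1)*γ^5 + (-100)*α + (685/3)*α*γ + ((-375/2))*α*γ^2 + (425/6)*α*γ^3 + ((-25/2))*α*γ^4 + (5/6)*α*γ^5 + 20*α^2 + ((-137/3))*α^2*γ + (75/2)*α^2*γ^2 + ((-85/6))*α^2*γ^3 + (5/2)*α^2*γ^4 + ((-1/6))*α^2*γ^5)*B2 α γ 1) * (A2_rec (α:=α) hγ 0)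
    + (((-24) + 50*γ + (-35)*γ^2 + 10*γ^3 + (-1)*γ^4 + 26*α + ((-325/6))*α*γ + (455/12)*α*γ^2 + ((-65/6))*α*γ^3 + (13/12)*α*γ^4 + (-9)*α^2 + (75/4)*α^2*γ + ((-105/8))*α^2*γ^2 + (15/4)*α^2*γ^3 + ((-3/8))*α^2*γ^4 + α^3 + ((-25/12))*α^3*γ + (35/24)*α^3*γ^2 + ((-5/12))*α^3*γ^3 + (1/24)*α^3*γ^4)*B2 α γ 0) * (A2_rec (α:=α) hγ 0)
    + (((-720) + 1704*γ + (-1697)*γ^2 + 922*γ^3 + ((-1181/4))*γ^4 + (223/4)*γ^5 + ((-23/4))*γ^6 + (1/4)*γ^7)*A2 α γ 0) * (B2_rec (α:=α) hγ 3)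
    + ((360 + (-792)*γ + (1353/2)*γ^2 + ((-3523/12))*γ^3 + (829/12)*γ^4 + ((-101/12))*γ^5 + (5/12)*γ^6 + (-120)*α + 344*α*γ + ((-2009/6))*α*γ^2 + (1885/12)*α*γ^3 + ((-467/12))*α*γ^4 + (59/12)*α*γ^5 + ((-1/4))*α*γ^6)*A2 α γ 0) * (B2_rec (α:=α) hγ 2)
    + (((-80) + 176*γ + (-137)*γ^2 + (97/2)*γ^3 + (-8)*γ^4 + (1/2)*γ^5 + 60*α + (-152)*α*γ + (1561/12)*α*γ^2 + ((-1175/24))*α*γ^3 + (101/12)*α*γ^4 + ((-13/24))*α*γ^5 + (-20)*α^2 + (112/3)*α^2*γ + ((-355/12))*α^2*γ^2 + (265/24)*α^2*γ^3 + ((-23/12))*α^2*γ^4 + (1/8)*α^2*γ^5)*A2 α γ 0) * (B2_rec (α:=α) hγ 1)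
    + ((10 + (-22)*γ + (33/2)*γ^2 + (-5)*γ^3 + (1/2)*γ^4 + (-20)*α + (463/12)*α*γ + ((-641/24))*α*γ^2 + (95/12)*α*γ^3 + ((-19/24))*α*γ^4 + 10*α^2 + ((-56/3))*α^2*γ + (35/3)*α^2*γ^2 + ((-10/3))*α^2*γ^3 + (1/3)*α^2*γ^4 + (25/12)*α^3*γ + ((-35/24))*α^3*γ^2 + (5/12)*α^3*γ^3 + ((-1/24))*α^3*γ^4)*A2 α γ 0) * (B2_rec (α:=α) hγ 0)
    + ((4 + (-6)*γ + 2*γ^2 + 5*α*γ + (-3)*α*γ^2 + (-5)*α^2 + 3*α^2*γ + α^2*γ^2 + (-2)*α^3*γ + α^4)*B2 α γ 0) * hA0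
    + ((4 + (-6)*γ + 2*γ^2 + 5*α*γ + (-3)*α*γ^2 + (-5)*α^2 + 3*α^2*γ + α^2*γ^2 + (-2)*α^3*γ + α^4)) * hB0
    + (((-4) + 6*γ + (-2)*γ^2 + (-5)*α*γ + 3*α*γ^2 + 5*α^2 + (-3)*α^2*γ + (-1)*α^2*γ^2 + 2*α^3*γ + (-1)*α^4)*D1 α γ 0) * hC0
    + (((-4) + 6*γ + (-2)*γ^2 + (-5)*α*γ + 3*α*γ^2 + 5*α^2 + (-3)*α^2*γ + (-1)*α^2*γ^2 + 2*α^3*γ + (-1)*α^4)) * hD0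

lemma hb5 : ((1-γ)*(2-γ)*(3-γ)*(4-γ)*(5-γ)) * (c2v γ * uu α γ 5)
    = ((γ-α-2)*(γ-α-1)*(1-α)*(2-α)) * vv α γ 1 := by
  refine mul_left_cancel₀ (mul_ne_zero (g0 hγ) (g6 hγ)) ?_
  rw [uu_exp5, vv_exp1, c2v]
  linear_combination ((576*γ + ((-9696/5))*γ^2 + (13604/5)*γ^3 + ((-10476/5))*γ^4 + (4869/5)*γ^5 + ((-1404/5))*γ^6 + (246/5)*γ^7 + ((-24/5))*γ^8 + (1/5)*γ^9)*B2 α γ 0) * (A2_rec (α:=α) hγ 4)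
    + ((864*γ + (-2880)*γ^2 + 3990*γ^3 + (-3025)*γ^4 + (2759/2)*γ^5 + ((-1555/4))*γ^6 + (265/4)*γ^7 + ((-25/4))*γ^8 + (1/4)*γ^9)*B2 α γ 1) * (A2_rec (α:=α) hγ 3)
    + (((-144)*γ + 456*γ^2 + (-589)*γ^3 + 406*γ^4 + ((-649/4))*γ^5 + (151/4)*γ^6 + ((-19/4))*γ^7 + (1/4)*γ^8 + (144/5)*α*γ + ((-456/5))*α*γ^2 + (589/5)*α*γ^3 + ((-406/5))*α*γ^4 + (649/20)*α*γ^5 + ((-151/20))*α*γ^6 + (19/20)*α*γ^7 + ((-1/20))*α*γ^8)*B2 α γ 0) * (A2_rec (α:=α) hγ 3)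
    + ((1440*γ + (-4728)*γ^2 + 6428*γ^3 + ((-14294/3))*γ^4 + (6349/3)*γ^5 + ((-1736/3))*γ^6 + (286/3)*γ^7 + ((-26/3))*γ^8 + (1/3)*γ^9)*B2 α γ 2) * (A2_rec (α:=α) hγ 2)
    + (((-288)*γ + 888*γ^2 + (-1108)*γ^3 + (2194/3)*γ^4 + (-277)*γ^5 + (181/3)*γ^6 + (-7)*γ^7 + (1/3)*γ^8 + 72*α*γ + (-222)*α*γ^2 + 277*α*γ^3 + ((-1097/6))*α*γ^4 + (277/4)*α*γ^5 + ((-181/12))*α*γ^6 + (7/4)*α*γ^7 + ((-1/12))*α*γ^8)*B2 α γ 1) * (A2_rec (α:=α) hγ 2)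
    + ((48*γ + (-140)*γ^2 + (484/3)*γ^3 + (-95)*γ^4 + (91/3)*γ^5 + (-5)*γ^6 + (1/3)*γ^7 + ((-108/5))*α*γ + 63*α*γ^2 + ((-363/5))*α*γ^3 + (171/4)*α*γ^4 + ((-273/20))*α*γ^5 + (9/4)*α*γ^6 + ((-3/20))*α*γ^7 + (12/5)*α^2*γ + (-7)*α^2*γ^2 + (121/15)*α^2*γ^3 + ((-19/4))*α^2*γ^4 + (91/60)*α^2*γ^5 + ((-1/4))*α^2*γ^6 + (1/60)*α^2*γ^7)*B2 α γ 0) * (A2_rec (α:=α) hγ 2)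
    + ((2880*γ + (-9216)*γ^2 + 12148*γ^3 + (-8694)*γ^4 + 3717*γ^5 + ((-1953/2))*γ^6 + (309/2)*γ^7 + ((-27/2))*γ^8 + (1/2)*γ^9)*B2 α γ 3) * (A2_rec (α:=α) hγ 1)
    + (((-720)*γ + 2124*γ^2 + (-2506)*γ^3 + 1547*γ^4 + ((-1085/2))*γ^5 + (217/2)*γ^6 + ((-23/2))*γ^7 + (1/2)*γ^8 + 240*α*γ + (-708)*α*γ^2 + (2506/3)*α*γ^3 + ((-1547/3))*α*γ^4 + (1085/6)*α*γ^5 + ((-217/6))*α*γ^6 + (23/6)*α*γ^7 + ((-1/6))*α*γ^8)*B2 α γ 2) * (A2_rec (α:=α) hγ 1)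
    + ((144*γ + (-396)*γ^2 + 422*γ^3 + (-225)*γ^4 + (127/2)*γ^5 + (-9)*γ^6 + (1/2)*γ^7 + (-84)*α*γ + 231*α*γ^2 + ((-1477/6))*α*γ^3 + (525/4)*α*γ^4 + ((-889/24))*α*γ^5 + (21/4)*α*γ^6 + ((-7/24))*α*γ^7 + 12*α^2*γ + (-33)*α^2*γ^2 + (211/6)*α^2*γ^3 + ((-75/4))*α^2*γ^4 + (127/24)*α^2*γ^5 + ((-3/4))*α^2*γ^6 + (1/24)*α^2*γ^7)*B2 α γ 1) * (A2_rec (α:=α) hγ 1)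
    + (((-24)*γ + 62*γ^2 + (-60)*γ^3 + (55/2)*γ^4 + (-6)*γ^5 + (1/2)*γ^6 + (94/5)*α*γ + ((-1457/30))*α*γ^2 + 47*α*γ^3 + ((-517/24))*α*γ^4 + (47/10)*α*γ^5 + ((-47/120))*α*γ^6 + ((-24/5))*α^2*γ + (62/5)*α^2*γ^2 + (-12)*α^2*γ^3 + (11/2)*α^2*γ^4 + ((-6/5))*α^2*γ^5 + (1/10)*α^2*γ^6 + (2/5)*α^3*γ + ((-31/30))*α^3*γ^2 + α^3*γ^3 + ((-11/24))*α^3*γ^4 + (1/10)*α^3*γ^5 + ((-1/120))*α^3*γ^6)*B2 α γ 0) * (A2_rec (α:=α) hγ 1)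
    + ((8640*γ + (-26208)*γ^2 + 32556*γ^3 + (-21952)*γ^4 + 8869*γ^5 + (-2212)*γ^6 + 334*γ^7 + (-28)*γ^8 + γ^9)*B2 α γ 4) * (A2_rec (α:=α) hγ 0)
    + (((-2880)*γ + 7776*γ^2 + (-8260)*γ^3 + 4564*γ^4 + (-1435)*γ^5 + 259*γ^6 + (-25)*γ^7 + γ^8 + 1440*α*γ + (-3888)*α*γ^2 + 4130*α*γ^3 + (-2282)*α*γ^4 + (1435/2)*α*γ^5 + ((-259/2))*α*γ^6 + (25/2)*α*γ^7 + ((-1/2))*α*γ^8)*B2 α γ 3) * (A2_rec (α:=α) hγ 0)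
    + ((720*γ + (-1764)*γ^2 + 1624*γ^3 + (-735)*γ^4 + 175*γ^5 + (-21)*γ^6 + γ^7 + (-600)*α*γ + 1470*α*γ^2 + ((-4060/3))*α*γ^3 + (1225/2)*α*γ^4 + ((-875/6))*α*γ^5 + (35/2)*α*γ^6 + ((-5/6))*α*γ^7 + 120*α^2*γ + (-294)*α^2*γ^2 + (812/3)*α^2*γ^3 + ((-245/2))*α^2*γ^4 + (175/6)*α^2*γ^5 + ((-7/2))*α^2*γ^6 + (1/6)*α^2*γ^7)*B2 α γ 2) * (A2_rec (α:=α) hγ 0)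
    + (((-144)*γ + 324*γ^2 + (-260)*γ^3 + 95*γ^4 + (-16)*γ^5 + γ^6 + 156*α*γ + (-351)*α*γ^2 + (845/3)*α*γ^3 + ((-1235/12))*α*γ^4 + (52/3)*α*γ^5 + ((-13/12))*α*γ^6 + (-54)*α^2*γ + (243/2)*α^2*γ^2 + ((-195/2))*α^2*γ^3 + (285/8)*α^2*γ^4 + (-6)*α^2*γ^5 + (3/8)*α^2*γ^6 + 6*α^3*γ + ((-27/2))*α^3*γ^2 + (65/6)*α^3*γ^3 + ((-95/24))*α^3*γ^4 + (2/3)*α^3*γ^5 + ((-1/24))*α^3*γ^6)*B2 α γ 1) * (A2_rec (α:=α) hγ 0)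
    + ((24*γ + (-50)*γ^2 + 35*γ^3 + (-10)*γ^4 + γ^5 + ((-154/5))*α*γ + (385/6)*α*γ^2 + ((-539/12))*α*γ^3 + (77/6)*α*γ^4 + ((-77/60))*α*γ^5 + (71/5)*α^2*γ + ((-355/12))*α^2*γ^2 + (497/24)*α^2*γ^3 + ((-71/12))*α^2*γ^4 + (71/120)*α^2*γ^5 + ((-14/5))*α^3*γ + (35/6)*α^3*γ^2 + ((-49/12))*α^3*γ^3 + (7/6)*α^3*γ^4 + ((-7/60))*α^3*γ^5 + (1/5)*α^4*γ + ((-5/12))*α^4*γ^2 + (7/24)*α^4*γ^3 + ((-1/12))*α^4*γ^4 + (1/120)*α^4*γ^5)*B2 α γ 0) * (A2_rec (α:=α) hγ 0)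
    + ((3456 + ((-61056/5))*γ + 18264*γ^2 + (-15292)*γ^3 + 7938*γ^4 + ((-13293/5))*γ^5 + 576*γ^6 + (-78)*γ^7 + 6*γ^8 + ((-1/5))*γ^9)*A2 α γ 0) * (B2_rec (α:=α) hγ 4)
    + (((-1728) + (32688/5)*γ + ((-45732/5))*γ^2 + (33193/5)*γ^3 + ((-14092/5))*γ^4 + (14563/20)*γ^5 + ((-2257/20))*γ^6 + (193/20)*γ^7 + ((-7/20))*γ^8 + (-864)*α + (144/5)*α*γ + (10074/5)*α*γ^2 + ((-11506/5))*α*γ^3 + (12023/10)*α*γ^4 + ((-3503/10))*α*γ^5 + (587/10)*α*γ^6 + ((-53/10))*α*γ^7 + (1/5)*α*γ^8)*A2 α γ 0) * (B2_rec (α:=α) hγ 3)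
    + ((288 + ((-7128/5))*γ + (10538/5)*γ^2 + ((-14293/10))*γ^3 + (2063/4)*γ^4 + ((-2053/20))*γ^5 + (213/20)*γ^6 + ((-9/20))*γ^7 + 432*α + ((-792/5))*α*γ + ((-4173/5))*α*γ^2 + (4624/5)*α*γ^3 + ((-1637/4))*α*γ^4 + (1823/20)*α*γ^5 + ((-203/20))*α*γ^6 + (9/20)*α*γ^7 + 144*α^2 + ((-864/5))*α^2*γ + (1129/5)*α^2*γ^2 + ((-1919/10))*α^2*γ^3 + 84*α^2*γ^4 + ((-96/5))*α^2*γ^5 + (11/5)*α^2*γ^6 + ((-1/10))*α^2*γ^7)*A2 α γ 0) * (B2_rec (α:=α) hγ 2)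
    + ((120*γ + (-254)*γ^2 + 186*γ^3 + ((-121/2))*γ^4 + 9*γ^5 + ((-1/2))*γ^6 + (-48)*α + (8/5)*α*γ + (2824/15)*α*γ^2 + ((-781/4))*α*γ^3 + (1765/24)*α*γ^4 + ((-237/20))*α*γ^5 + (83/120)*α*γ^6 + (-72)*α^2 + (612/5)*α^2*γ + ((-1141/10))*α^2*γ^2 + (157/2)*α^2*γ^3 + ((-225/8))*α^2*γ^4 + (23/5)*α^2*γ^5 + ((-11/40))*α^2*γ^6 + (-24)*α^3 + (4/5)*α^3*γ + (349/30)*α^3*γ^2 + ((-37/4))*α^3*γ^3 + (10/3)*α^3*γ^4 + ((-11/20))*α^3*γ^5 + (1/30)*α^3*γ^6)*A2 α γ 0) * (B2_rec (α:=α) hγ 1)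
    + (((-6)*γ + 16*γ^2 + ((-29/2))*γ^3 + 5*γ^4 + ((-1/2))*γ^5 + (-12)*α + (212/5)*α*γ + ((-571/12))*α*γ^2 + (677/24)*α*γ^3 + ((-107/12))*α*γ^4 + (107/120)*α*γ^5 + (-6)*α^2 + ((-119/5))*α^2*γ + (439/12)*α^2*γ^2 + ((-413/24))*α^2*γ^3 + (59/12)*α^2*γ^4 + ((-59/120))*α^2*γ^5 + 12*α^3 + ((-62/5))*α^3*γ + ((-65/12))*α^3*γ^2 + (91/24)*α^3*γ^3 + ((-13/12))*α^3*γ^4 + (13/120)*α^3*γ^5 + 6*α^4 + ((-1/5))*α^4*γ + (5/12)*α^4*γ^2 + ((-7/24))*α^4*γ^3 + (1/12)*α^4*γ^4 + ((-1/120))*α^4*γ^5)*A2 α γ 0) * (B2_rec (α:=α) hγ 0)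
    + (((-24) + 40*γ + (-18)*γ^2 + 2*γ^3 + (-30)*α*γ + 23*α*γ^2 + (-3)*α*γ^3 + 30*α^2 + (-23)*α^2*γ + (-3)*α^2*γ^2 + α^2*γ^3 + 12*α^3*γ + (-2)*α^3*γ^2 + (-6)*α^4 + α^4*γ)*D1 α γ 0) * (C1_rec (α:=α) hγ 0)
    + (((-4)*γ + 6*γ^2 + (-2)*γ^3 + (-5)*α*γ^2 + 3*α*γ^3 + 5*α^2*γ + (-3)*α^2*γ^2 + (-1)*α^2*γ^3 + 2*α^3*γ^2 + (-1)*α^4*γ)*C1 α γ 0) * (D1_rec (α:=α) hγ 0)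
    + (((-12)*γ + 18*γ^2 + (-6)*γ^3 + 24*α + (-36)*α*γ + (-3)*α*γ^2 + 9*α*γ^3 + 45*α^2*γ + (-27)*α^2*γ^2 + (-3)*α^2*γ^3 + (-30)*α^3 + 18*α^3*γ + 12*α^3*γ^2 + (-15)*α^4*γ + 6*α^5)*B2 α γ 0) * hA0
    + (((-12)*γ + 18*γ^2 + (-6)*γ^3 + 24*α + (-36)*α*γ + (-3)*α*γ^2 + 9*α*γ^3 + 45*α^2*γ + (-27)*α^2*γ^2 + (-3)*α^2*γ^3 + (-30)*α^3 + 18*α^3*γ + 12*α^3*γ^2 + (-15)*α^4*γ + 6*α^5)) * hB0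
    + ((12*γ + (-18)*γ^2 + 6*γ^3 + (-24)*α + 36*α*γ + 3*α*γ^2 + (-9)*α*γ^3 + (-45)*α^2*γ + 27*α^2*γ^2 + 3*α^2*γ^3 + 30*α^3 + (-18)*α^3*γ + (-12)*α^3*γ^2 + 15*α^4*γ + (-6)*α^5)*D1 α γ 0) * hC0
    + ((12*γ + (-18)*γ^2 + 6*γ^3 + (-24)*α + 36*α*γ + 3*α*γ^2 + (-9)*α*γ^3 + (-45)*α^2*γ + 27*α^2*γ^2 + 3*α^2*γ^3 + 30*α^3 + (-18)*α^3*γ + (-12)*α^3*γ^2 + 15*α^4*γ + (-6)*α^5)) * hD0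

lemma hmain (n : ℕ) : ((1-γ)*(2-γ)*(3-γ)*(4-γ)*(5-γ)) * (c2v γ * uu α γ (n+4))
    = ((γ-α-2)*(γ-α-1)*(1-α)*(2-α)) * vv α γ n := by
  induction n using Nat.twoStepInduction with
  | zero => exact hb4 hγ
  | one => exact hb5 hγ
  | more n ih1 ih2 =>
    have ru := Ru (α:=α) hγ (n+4)
    rw [show n+4+2 = n+6 from rfl, show n+4+1 = n+5 from rfl] at ru
    push_cast at ru
    have rv := Rv (α:=α) hγ n
    rw [show n+1+4 = n+5 from rfl] at ih2
    rw [show n+2+4 = n+6 from rfl]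
    have hp2 : P2f γ ((n:ℝ)+4) ≠ 0 := by
      have e : P2f γ ((n:ℝ)+4) = (((n:ℝ)+2)*((n:ℝ)+6)) * (((n:ℝ)+1+γ)*((n:ℝ)+7-γ)) := by
        unfold P2f; ring
      rw [e]
      have h1 : (0:ℝ) < ((n:ℝ)+2)*((n:ℝ)+6) := by positivity
      have h2 : (n:ℝ)+1+γ ≠ 0 := fun h => hγ (-((n:ℤ)+1)) (by push_cast; linarith)
      have h3 : (n:ℝ)+7-γ ≠ 0 := fun h => hγ ((n:ℤ)+7) (by push_cast; linarith)
      exact mul_ne_zero (ne_of_gt h1) (mul_ne_zero h2 h3)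
    refine mul_left_cancel₀ hp2 ?_
    linear_combination ((1-γ)*(2-γ)*(3-γ)*(4-γ)*(5-γ) * c2v γ) * ru
      - ((γ-α-2)*(γ-α-1)*(1-α)*(2-α)) * rv
      - P1f α γ ((n:ℝ)+4) * ih2 - P0f ((n:ℝ)+4) * ih1

lemma hmainF (n : ℕ) : (2-γ)*(3-γ)*(4-γ) * uu α γ (n+4)
    = ((γ-α-2)*(γ-α-1)*(1-α)*(2-α)/((1-γ)*(2-γ)*(3-γ)*(4-γ)*(5-γ))) * vv α γ n := by
  have hDc : (1-γ)*(2-γ)*(3-γ)*(4-γ)*(5-γ) ≠ 0 := by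
    have h1 : (1:ℝ)-γ ≠ 0 := fun h => hγ 1 (by push_cast; linarith)
    have h2 : (2:ℝ)-γ ≠ 0 := fun h => hγ 2 (by push_cast; linarith)
    have h3 : (3:ℝ)-γ ≠ 0 := fun h => hγ 3 (by push_cast; linarith)
    have h4 : (4:ℝ)-γ ≠ 0 := fun h => hγ 4 (by push_cast; linarith)
    have h5 : (5:ℝ)-γ ≠ 0 := fun h => hγ 5 (by push_cast; linarith)
    exact mul_ne_zero (mul_ne_zero (mul_ne_zero (mul_ne_zero h1 h2) h3) h4) h5
  rw [div_mul_eq_mul_div, eq_div_iff hDc]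
  have h := hmain (α:=α) hγ n
  rw [c2v] at h
  linear_combination h

omit hγ in
lemma summable_norm_F11term (a b x : ℝ) (hb : ∀ i : ℕ, b + (i:ℝ) ≠ 0) :
    Summable (fun n => ‖poch a n * x^n / (poch b n * (n.factorial:ℝ))‖) := by
  apply summable_of_ratio_norm_eventually_le (r := 1/2) (by norm_num)
  obtain ⟨N, hN⟩ := exists_nat_ge (2*(abs b) + 8*(abs x) + 8*(abs a)*(abs x) + 10)
  rw [Filter.eventually_atTop]
  refine ⟨N, fun n hn => ?_⟩
  have hnN : (2*(abs b) + 8*(abs x) + 8*(abs a)*(abs x) + 10) ≤ (n:ℝ) := le_trans hN (by exact_mod_cast hn)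
  have hpochb : poch b n ≠ 0 := poch_ne_zero hb n
  have hfact : ((n.factorial:ℕ):ℝ) ≠ 0 := Nat.cast_ne_zero.mpr n.factorial_ne_zero
  have hbn : b + (n:ℝ) ≠ 0 := hb n
  have hn1 : ((n:ℝ)+1) ≠ 0 := by positivity
  have hrec : poch a (n+1) * x^(n+1) / (poch b (n+1) * ((n+1).factorial:ℝ))
      * ((b+(n:ℝ))*((n:ℝ)+1))
      = (poch a n * x^n / (poch b n * (n.factorial:ℝ))) * ((a+(n:ℝ))*x) := by
    rw [poch_succ, poch_succ, Nat.factorial_succ]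
    push_cast
    field_simp
    ring
  rw [norm_norm, norm_norm]
  have habs := congrArg abs hrec
  rw [abs_mul, abs_mul, abs_mul, abs_mul] at habs
  rw [show |(n:ℝ)+1| = (n:ℝ)+1 from abs_of_pos (by positivity)] at habs
  have hpos : (0:ℝ) < abs (b+(n:ℝ)) * ((n:ℝ)+1) := by
    have h0 : abs (b+(n:ℝ)) > 0 := abs_pos.mpr hbn
    positivity
  rw [Real.norm_eq_abs, Real.norm_eq_abs, ← mul_le_mul_iff_of_pos_right hpos]
  have hstep : abs (a+(n:ℝ)) * abs x ≤ 1/2 * (abs (b+(n:ℝ)) * ((n:ℝ)+1)) := by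
    have h1 : abs (a+(n:ℝ)) ≤ abs a + (n:ℝ) := by
      calc abs (a+(n:ℝ)) ≤ abs a + abs ((n:ℝ)) := abs_add_le a _
        _ = abs a + (n:ℝ) := by rw [Nat.abs_cast]
    have h2 : (n:ℝ) - abs b ≤ abs (b+(n:ℝ)) := by
      have hna := neg_abs_le b
      have hlas := le_abs_self (b+(n:ℝ))
      linarith
    have ha0 : (0:ℝ) ≤ abs a := abs_nonneg a
    have hb0 : (0:ℝ) ≤ abs b := abs_nonneg b
    have hx0 : (0:ℝ) ≤ abs x := abs_nonneg x
    have hax : (0:ℝ) ≤ abs a * abs x := mul_nonneg ha0 hx0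
    have key : (abs a + (n:ℝ)) * abs x ≤ 1/2 * (((n:ℝ) - abs b) * ((n:ℝ)+1)) := by
      nlinarith [mul_nonneg (by linarith : (0:ℝ) ≤ (n:ℝ) - 8*abs x) (by linarith : (0:ℝ) ≤ (n:ℝ)),
        mul_nonneg hb0 (by linarith : (0:ℝ) ≤ (n:ℝ)), mul_nonneg hb0 hx0]
    have h3 : abs (a+(n:ℝ)) * abs x ≤ (abs a + (n:ℝ)) * abs x :=
      mul_le_mul_of_nonneg_right h1 hx0
    have h4 : 1/2 * (((n:ℝ) - abs b) * ((n:ℝ)+1)) ≤ 1/2 * (abs (b+(n:ℝ)) * ((n:ℝ)+1)) := by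
      have h5 : (0:ℝ) ≤ (n:ℝ)+1 := by positivity
      nlinarith
    linarith
  have hL := habs
  rw [hL]
  have hnn := abs_nonneg (poch a n * x^n / (poch b n * ((n.factorial:ℕ):ℝ)))
  calc abs (poch a n * x^n / (poch b n * ((n.factorial:ℕ):ℝ))) * (abs (a+(n:ℝ)) * abs x)
      ≤ abs (poch a n * x^n / (poch b n * ((n.factorial:ℕ):ℝ))) * (1/2 * (abs (b+(n:ℝ)) * ((n:ℝ)+1))) :=
        mul_le_mul_of_nonneg_left hstep hnn
    _ = 1/2 * abs (poch a n * x^n / (poch b n * ((n.factorial:ℕ):ℝ))) * (abs (b+(n:ℝ)) * ((n:ℝ)+1)) := by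
        ring

omit hγ in
lemma hinner2 (t : ℝ) (n : ℕ) :
    ∑ k ∈ Finset.range (n+1),
      (poch (1-α) k * (-t)^k / (poch (2-γ) k * (k.factorial:ℝ)))
        * (poch (α-2) (n-k) * t^(n-k) / (poch (γ-4) (n-k) * ((n-k).factorial:ℝ)))
    = uu α γ n * t^n := by
  rw [uu, Finset.sum_mul]
  refine Finset.sum_congr rfl (fun k hk => ?_)
  have hk' : k ≤ n := Nat.lt_succ_iff.mp (Finset.mem_range.mp hk)
  have ht : t^k * t^(n-k) = t^n := by rw [← pow_add]; congr 1; omega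
  calc (poch (1-α) k * (-t)^k / (poch (2-γ) k * (k.factorial:ℝ)))
        * (poch (α-2) (n-k) * t^(n-k) / (poch (γ-4) (n-k) * ((n-k).factorial:ℝ)))
      = (A2 α γ k * B2 α γ (n-k)) * (t^k * t^(n-k)) := by
        unfold A2 B2; rw [neg_pow]; ring
    _ = A2 α γ k * B2 α γ (n-k) * t^n := by rw [ht]

omit hγ in
lemma hinner1 (t : ℝ) (n : ℕ) :
    ∑ k ∈ Finset.range (n+1),
      (poch α k * t^k / (poch γ k * (k.factorial:ℝ)))
        * (poch (3-α) (n-k) * (-t)^(n-k) / (poch (6-γ) (n-k) * ((n-k).factorial:ℝ)))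
    = vv α γ n * t^n := by
  rw [vv, Finset.sum_mul]
  refine Finset.sum_congr rfl (fun k hk => ?_)
  have hk' : k ≤ n := Nat.lt_succ_iff.mp (Finset.mem_range.mp hk)
  have ht : t^k * t^(n-k) = t^n := by rw [← pow_add]; congr 1; omega
  calc (poch α k * t^k / (poch γ k * (k.factorial:ℝ)))
        * (poch (3-α) (n-k) * (-t)^(n-k) / (poch (6-γ) (n-k) * ((n-k).factorial:ℝ)))
      = (C1 α γ k * D1 α γ (n-k)) * (t^k * t^(n-k)) := by
        unfold C1 D1; rw [neg_pow]; ring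
    _ = C1 α γ k * D1 α γ (n-k) * t^n := by rw [ht]

lemma hprod2 (t : ℝ) :
    F11 (1-α) (2-γ) (-t) * F11 (α-2) (γ-4) t = ∑' n, uu α γ n * t^n := by
  have hfa := summable_norm_F11term (1-α) (2-γ) (-t) (g2γ hγ)
  have hfb := summable_norm_F11term (α-2) (γ-4) t (gγ4 hγ)
  calc F11 (1-α) (2-γ) (-t) * F11 (α-2) (γ-4) t
      = (∑' n, poch (1-α) n * (-t)^n / (poch (2-γ) n * (n.factorial:ℝ)))
        * (∑' n, poch (α-2) n * t^n / (poch (γ-4) n * (n.factorial:ℝ))) := rfl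
    _ = ∑' n, ∑ k ∈ Finset.range (n+1),
          (poch (1-α) k * (-t)^k / (poch (2-γ) k * (k.factorial:ℝ)))
            * (poch (α-2) (n-k) * t^(n-k) / (poch (γ-4) (n-k) * ((n-k).factorial:ℝ))) :=
        tsum_mul_tsum_eq_tsum_sum_range_of_summable_norm hfa hfb
    _ = ∑' n, uu α γ n * t^n := tsum_congr (hinner2 (α:=α) (γ:=γ) t)

lemma hprod1 (t : ℝ) :
    F11 α γ t * F11 (3-α) (6-γ) (-t) = ∑' n, vv α γ n * t^n := by
  have hfa := summable_norm_F11term α γ t (gγ0 hγ)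
  have hfb := summable_norm_F11term (3-α) (6-γ) (-t) (g6γ hγ)
  calc F11 α γ t * F11 (3-α) (6-γ) (-t)
      = (∑' n, poch α n * t^n / (poch γ n * (n.factorial:ℝ)))
        * (∑' n, poch (3-α) n * (-t)^n / (poch (6-γ) n * (n.factorial:ℝ))) := rfl
    _ = ∑' n, ∑ k ∈ Finset.range (n+1),
          (poch α k * t^k / (poch γ k * (k.factorial:ℝ)))
            * (poch (3-α) (n-k) * (-t)^(n-k) / (poch (6-γ) (n-k) * ((n-k).factorial:ℝ))) :=
        tsum_mul_tsum_eq_tsum_sum_range_of_summable_norm hfa hfb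
    _ = ∑' n, vv α γ n * t^n := tsum_congr (hinner1 (α:=α) (γ:=γ) t)

lemma su_summable (t : ℝ) : Summable (fun n => uu α γ n * t^n) := by
  have hfa := summable_norm_F11term (1-α) (2-γ) (-t) (g2γ hγ)
  have hfb := summable_norm_F11term (α-2) (γ-4) t (gγ4 hγ)
  exact ((summable_norm_sum_mul_range_of_summable_norm hfa hfb).of_norm).congr
    (hinner2 (α:=α) (γ:=γ) t)

end
end K6


theorem Kummer_example6 (α γ : ℝ) (hγ : ∀ k : ℤ, γ ≠ (k : ℝ)) (t : ℝ) :
    (γ - α - 2) * (γ - α - 1) * (1 - α) * (2 - α) * t ^ 4 /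
        ((1 - γ) * (2 - γ) * (3 - γ) * (4 - γ) * (5 - γ)) *
        F11 α γ t * F11 (3 - α) (6 - γ) (-t) -
      (2 - γ) * (3 - γ) * (4 - γ) * F11 (1 - α) (2 - γ) (-t) * F11 (α - 2) (γ - 4) t =
    (γ - 4) * (γ - 3) * (γ - 2) + (2 * α - γ) * (γ - 3) * t := by
  have hP2 := K6.hprod2 (α:=α) hγ t
  have hP1 := K6.hprod1 (α:=α) hγ t
  have hSu := K6.su_summable (α:=α) hγ t
  have hsummul : Summable (fun n => (2-γ)*(3-γ)*(4-γ) * (K6.uu α γ n * t^n)) :=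
    hSu.mul_left _
  have h4 := Summable.sum_add_tsum_nat_add (f := fun n => (2-γ)*(3-γ)*(4-γ) * (K6.uu α γ n * t^n)) 4 hsummul
  have hr4 : ∑ i ∈ Finset.range 4, (2-γ)*(3-γ)*(4-γ) * (K6.uu α γ i * t^i)
      = (2-γ)*(3-γ)*(4-γ) * (K6.uu α γ 0 * t^0) + (2-γ)*(3-γ)*(4-γ) * (K6.uu α γ 1 * t^1)
        + (2-γ)*(3-γ)*(4-γ) * (K6.uu α γ 2 * t^2) + (2-γ)*(3-γ)*(4-γ) * (K6.uu α γ 3 * t^3) := by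
    rw [Finset.sum_range_succ, Finset.sum_range_succ, Finset.sum_range_succ,
      Finset.sum_range_one]
  have hshift : ∀ i:ℕ, (2-γ)*(3-γ)*(4-γ) * (K6.uu α γ (i+4) * t^(i+4))
      = ((γ-α-2)*(γ-α-1)*(1-α)*(2-α)/((1-γ)*(2-γ)*(3-γ)*(4-γ)*(5-γ))) * (K6.vv α γ i * t^i) * t^4 := by
    intro i
    have h := K6.hmainF (α:=α) hγ i
    rw [pow_add]
    linear_combination (t^i * t^4) * h
  have htshift : ∑' i:ℕ, (2-γ)*(3-γ)*(4-γ) * (K6.uu α γ (i+4) * t^(i+4))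
      = ((γ-α-2)*(γ-α-1)*(1-α)*(2-α)/((1-γ)*(2-γ)*(3-γ)*(4-γ)*(5-γ))) * (∑' i:ℕ, K6.vv α γ i * t^i) * t^4 := by
    rw [tsum_congr hshift]
    rw [tsum_mul_right, tsum_mul_left]
  have htfull : ∑' i:ℕ, (2-γ)*(3-γ)*(4-γ) * (K6.uu α γ i * t^i)
      = (2-γ)*(3-γ)*(4-γ) * ∑' i:ℕ, K6.uu α γ i * t^i := tsum_mul_left
  have hkey : ((γ-α-2)*(γ-α-1)*(1-α)*(2-α)/((1-γ)*(2-γ)*(3-γ)*(4-γ)*(5-γ))) * (∑' n:ℕ, K6.vv α γ n * t^n) * t^4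
      = (2-γ)*(3-γ)*(4-γ) * (∑' n:ℕ, K6.uu α γ n * t^n)
        - ((2-γ)*(3-γ)*(4-γ) * (K6.uu α γ 0 * t^0) + (2-γ)*(3-γ)*(4-γ) * (K6.uu α γ 1 * t^1)
          + (2-γ)*(3-γ)*(4-γ) * (K6.uu α γ 2 * t^2) + (2-γ)*(3-γ)*(4-γ) * (K6.uu α γ 3 * t^3)) := by
    rw [← htshift, ← hr4]
    rw [htfull, hr4] at h4
    linarith [h4]
  have huu0 : K6.uu α γ 0 = 1 := by rw [K6.uu_exp0, K6.hA0, K6.hB0]; ring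
  have hq1' : (2-γ)*(3-γ)*(4-γ) * K6.uu α γ 1 + (2*α-γ)*(γ-3) = 0 := by
    have h := K6.hq1 (α:=α) hγ
    simp only [K6.c2v] at h
    linear_combination h
  have hu2' := K6.hu2 (α:=α) hγ
  have hu3' := K6.hu3 (α:=α) hγ
  linear_combination hkey
    + ((γ-α-2)*(γ-α-1)*(1-α)*(2-α)*t^4/((1-γ)*(2-γ)*(3-γ)*(4-γ)*(5-γ))) * hP1
    - ((2-γ)*(3-γ)*(4-γ)) * hP2
    - t * hq1'
    - ((2-γ)*(3-γ)*(4-γ)) * huu0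
    - ((2-γ)*(3-γ)*(4-γ)*t^2) * hu2'
    - ((2-γ)*(3-γ)*(4-γ)*t^3) * hu3'
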